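/- Let n ≥ 1, let E, F ⊂ ℝⁿ be non-empty compact sets and let λ > 0. Then for all x ∈ ℝⁿ, |I_λ(x; E) − I_λ(x; F)| ≤ 12√λ · dist_H(E, F), i.e. the intersection extraction transform is Hausdorff-Lipschitz continuous with constant 12√λ. -/

import Mathlib

open Metric

section CCAux
variable {n : ℕ}

/-- Convex envelope: pointwise sup of affine minorants. -/
noncomputable def convEnv {n : ℕ} (g : EuclideanSpace ℝ (Fin n) → ℝ)
    (x : EuclideanSpace ℝ (Fin n)) : ℝ :=
  sSup {a : ℝ | ∃ ℓ : EuclideanSpace ℝ (Fin n) →ᵃ[ℝ] ℝ, (∀ y, ℓ y ≤ g y) ∧ a = ℓ x}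

/-- Lower compensated convex transform. -/
noncomputable def lowerT {n : ℕ} (lam : ℝ) (f : EuclideanSpace ℝ (Fin n) → ℝ)
    (x : EuclideanSpace ℝ (Fin n)) : ℝ :=
  convEnv (fun y => f y + lam * ‖y‖ ^ 2) x - lam * ‖x‖ ^ 2

/-- Upper compensated convex transform. -/
noncomputable def upperT {n : ℕ} (lam : ℝ) (f : EuclideanSpace ℝ (Fin n) → ℝ)
    (x : EuclideanSpace ℝ (Fin n)) : ℝ :=
  lam * ‖x‖ ^ 2 - convEnv (fun y => lam * ‖y‖ ^ 2 - f y) x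

/-- Characteristic function of a set: `χ_K(x) = 1` if `x ∈ K`, `0` otherwise. -/
noncomputable def chi {n : ℕ} (K : Set (EuclideanSpace ℝ (Fin n)))
    (x : EuclideanSpace ℝ (Fin n)) : ℝ :=
  K.indicator (fun _ => (1 : ℝ)) x

private lemma ccBdd {g : EuclideanSpace ℝ (Fin n) → ℝ} {x : EuclideanSpace ℝ (Fin n)} :
    BddAbove {a : ℝ | ∃ ℓ : EuclideanSpace ℝ (Fin n) →ᵃ[ℝ] ℝ, (∀ y, ℓ y ≤ g y) ∧ a = ℓ x} :=
  ⟨g x, by rintro a ⟨ℓ, hℓ, rfl⟩; exact hℓ x⟩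

private lemma le_convEnv {g : EuclideanSpace ℝ (Fin n) → ℝ} {x : EuclideanSpace ℝ (Fin n)}
    (ℓ : EuclideanSpace ℝ (Fin n) →ᵃ[ℝ] ℝ) (h : ∀ y, ℓ y ≤ g y) : ℓ x ≤ convEnv g x :=
  le_csSup ccBdd ⟨ℓ, h, rfl⟩

private lemma convEnv_le {g : EuclideanSpace ℝ (Fin n) → ℝ} {x : EuclideanSpace ℝ (Fin n)} {c : ℝ}
    (ℓ0 : EuclideanSpace ℝ (Fin n) →ᵃ[ℝ] ℝ) (h0 : ∀ y, ℓ0 y ≤ g y)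
    (h : ∀ ℓ : EuclideanSpace ℝ (Fin n) →ᵃ[ℝ] ℝ, (∀ y, ℓ y ≤ g y) → ℓ x ≤ c) :
    convEnv g x ≤ c := by
  unfold convEnv
  have hne : {a : ℝ | ∃ ℓ : EuclideanSpace ℝ (Fin n) →ᵃ[ℝ] ℝ,
      (∀ y, ℓ y ≤ g y) ∧ a = ℓ x}.Nonempty := ⟨ℓ0 x, ℓ0, h0, rfl⟩
  apply csSup_le hne
  rintro a ⟨ℓ, hℓ, rfl⟩; exact h ℓ hℓ

private lemma chi_of_mem {K : Set (EuclideanSpace ℝ (Fin n))} {y : EuclideanSpace ℝ (Fin n)}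
    (h : y ∈ K) : chi K y = 1 := Set.indicator_of_mem h _

private lemma chi_of_not_mem {K : Set (EuclideanSpace ℝ (Fin n))} {y : EuclideanSpace ℝ (Fin n)}
    (h : y ∉ K) : chi K y = 0 := Set.indicator_of_notMem h _

private lemma chi_nonneg (K : Set (EuclideanSpace ℝ (Fin n))) (y : EuclideanSpace ℝ (Fin n)) :
    0 ≤ chi K y := Set.indicator_nonneg (fun _ _ => zero_le_one) y

private lemma chi_le_one (K : Set (EuclideanSpace ℝ (Fin n))) (y : EuclideanSpace ℝ (Fin n)) :
    chi K y ≤ 1 := by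
  by_cases h : y ∈ K
  · rw [chi_of_mem h]
  · rw [chi_of_not_mem h]; norm_num

set_option maxHeartbeats 1000000 in
/-- Core pointwise estimate: an affine minorant of `λ|·|² - χ_F`, evaluated at a point
within distance `δ` of `F`, satisfies `ℓ y ≤ λ|y|² - 1 + 2√λ δ`. -/
private lemma key {lam δ : ℝ} (hlam : 0 < lam) (hδ : 0 ≤ δ)
    {F : Set (EuclideanSpace ℝ (Fin n))}
    (ℓ : EuclideanSpace ℝ (Fin n) →ᵃ[ℝ] ℝ)
    (hF : ∀ w, ℓ w ≤ lam * ‖w‖ ^ 2 - chi F w)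
    {y z : EuclideanSpace ℝ (Fin n)} (hz : z ∈ F) (hyz : dist y z ≤ δ) :
    ℓ y ≤ lam * ‖y‖ ^ 2 - 1 + 2 * Real.sqrt lam * δ := by
  set v : EuclideanSpace ℝ (Fin n) :=
    (InnerProductSpace.toDual ℝ _).symm (LinearMap.toContinuousLinearMap ℓ.linear) with hv
  have hvw : ∀ w, (inner ℝ v w : ℝ) = ℓ.linear w := by
    intro w; rw [hv, InnerProductSpace.toDual_symm_apply]; simp
  set p : EuclideanSpace ℝ (Fin n) := (2 * lam)⁻¹ • v with hp
  have hlam2 : (2 : ℝ) * lam ≠ 0 := by positivity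
  have hω : ∀ w, ℓ w = 2 * lam * (inner ℝ p w : ℝ) + ℓ 0 := by
    intro w
    have h1 : ℓ w = ℓ.linear w + ℓ 0 := by simpa using ℓ.map_vadd 0 w
    have h2 : (inner ℝ p w : ℝ) = (2 * lam)⁻¹ * (inner ℝ v w : ℝ) := by
      rw [hp, real_inner_smul_left]
    rw [h1, ← hvw w, h2]
    field_simp
  set β : ℝ := lam * ‖p‖ ^ 2 + ℓ 0 with hβ
  have hid : ∀ w, lam * ‖w‖ ^ 2 - ℓ w = lam * ‖w - p‖ ^ 2 - β := by
    intro w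
    have hns : ‖w - p‖ ^ 2 = ‖w‖ ^ 2 - 2 * (inner ℝ w p : ℝ) + ‖p‖ ^ 2 := norm_sub_sq_real w p
    have hsym : (inner ℝ p w : ℝ) = (inner ℝ w p : ℝ) := real_inner_comm w p
    rw [hω w, hβ, hns, hsym]; ring
  have hle : ∀ w, ℓ w ≤ lam * ‖w‖ ^ 2 := by
    intro w; linarith [hF w, chi_nonneg F w]
  have hβ0 : β ≤ 0 := by
    have h1 := hid p
    rw [sub_self, norm_zero] at h1
    norm_num at h1
    linarith [hle p]
  set σ := Real.sqrt lam with hσ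
  have hσ0 : 0 < σ := Real.sqrt_pos.mpr hlam
  have hσ2 : σ ^ 2 = lam := Real.sq_sqrt hlam.le
  have hzK : 1 + β ≤ lam * ‖z - p‖ ^ 2 := by
    have h1 := hF z
    rw [chi_of_mem hz] at h1
    have h2 := hid z
    linarith
  have hgoal : 1 + β - 2 * σ * δ ≤ lam * ‖y - p‖ ^ 2 →
      ℓ y ≤ lam * ‖y‖ ^ 2 - 1 + 2 * σ * δ := by
    intro h; have := hid y; linarith
  apply hgoal
  by_cases hc : 1 + β ≤ 2 * σ * δ
  · nlinarith [sq_nonneg ‖y - p‖, hlam.le]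
  · push_neg at hc
    have hσδ : 0 ≤ σ * δ := by positivity
    have hKpos : (0 : ℝ) < 1 + β := lt_of_le_of_lt (by linarith) hc
    set R := Real.sqrt (1 + β) with hR
    have hR2 : R ^ 2 = 1 + β := Real.sq_sqrt hKpos.le
    have hR0 : 0 ≤ R := Real.sqrt_nonneg _
    have hR1 : R ≤ 1 := by
      rw [hR]
      calc Real.sqrt (1 + β) ≤ Real.sqrt 1 := Real.sqrt_le_sqrt (by linarith)
        _ = 1 := Real.sqrt_one
    have ha : σ * δ ≤ R := by
      have h1 : (σ * δ) ^ 2 ≤ 1 + β := by nlinarith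
      calc σ * δ = Real.sqrt ((σ * δ) ^ 2) := (Real.sqrt_sq hσδ).symm
        _ ≤ Real.sqrt (1 + β) := Real.sqrt_le_sqrt h1
    have ht : R ≤ σ * ‖z - p‖ := by
      have h1 : R ^ 2 ≤ (σ * ‖z - p‖) ^ 2 := by
        rw [hR2, mul_pow, hσ2]; exact hzK
      calc R = Real.sqrt (R ^ 2) := (Real.sqrt_sq hR0).symm
        _ ≤ Real.sqrt ((σ * ‖z - p‖) ^ 2) := Real.sqrt_le_sqrt h1
        _ = σ * ‖z - p‖ := Real.sqrt_sq (by positivity)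
    have htri : ‖z - p‖ - δ ≤ ‖y - p‖ := by
      have h1 : ‖z - p‖ ≤ ‖z - y‖ + ‖y - p‖ := by
        calc ‖z - p‖ = ‖(z - y) + (y - p)‖ := by rw [sub_add_sub_cancel]
          _ ≤ ‖z - y‖ + ‖y - p‖ := norm_add_le _ _
      have h2 : ‖z - y‖ ≤ δ := by
        rw [← dist_eq_norm, dist_comm]; exact hyz
      linarith
    have h5 : R - σ * δ ≤ σ * ‖y - p‖ := by
      nlinarith [mul_le_mul_of_nonneg_left htri hσ0.le]
    have h6 : 0 ≤ R - σ * δ := by linarith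
    nlinarith [mul_self_le_mul_self h6 h5, hR2, hσ2, hσδ,
      mul_le_mul_of_nonneg_right hR1 hσδ]

/-- One-sided Hausdorff comparison of upper transforms of characteristic functions. -/
private lemma upperT_chi_le {lam δ : ℝ} (hlam : 0 < lam) (hδ : 0 ≤ δ)
    {E F : Set (EuclideanSpace ℝ (Fin n))}
    (hcov : ∀ y ∈ E, ∃ z ∈ F, dist y z ≤ δ) (x : EuclideanSpace ℝ (Fin n)) :
    upperT lam (chi E) x ≤ upperT lam (chi F) x + 2 * Real.sqrt lam * δ := by
  unfold upperT
  have main : convEnv (fun y => lam * ‖y‖ ^ 2 - chi F y) x ≤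
      convEnv (fun y => lam * ‖y‖ ^ 2 - chi E y) x + 2 * Real.sqrt lam * δ := by
    apply convEnv_le (AffineMap.const ℝ (EuclideanSpace ℝ (Fin n)) (-1))
    · intro y
      have h1 := chi_le_one F y
      have h2 : 0 ≤ lam * ‖y‖ ^ 2 := by positivity
      simp only [AffineMap.const_apply]
      linarith
    · intro ℓ hℓ
      set c : ℝ := 2 * Real.sqrt lam * δ with hc
      have hc0 : 0 ≤ c := by positivity
      set ℓ' : EuclideanSpace ℝ (Fin n) →ᵃ[ℝ] ℝ :=
        ℓ + AffineMap.const ℝ (EuclideanSpace ℝ (Fin n)) (-c) with hℓ'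
      have happ : ∀ w, ℓ' w = ℓ w - c := by
        intro w; simp [hℓ', sub_eq_add_neg]
      have hmin : ∀ w, ℓ' w ≤ lam * ‖w‖ ^ 2 - chi E w := by
        intro w
        by_cases hw : w ∈ E
        · obtain ⟨z, hzF, hdz⟩ := hcov w hw
          have hk := key hlam hδ ℓ hℓ hzF hdz
          rw [happ w, chi_of_mem hw]; linarith
        · rw [happ w, chi_of_not_mem hw]
          linarith [hℓ w, chi_nonneg F w]
      have h3 := le_convEnv (x := x) ℓ' hmin
      rw [happ x] at h3
      linarith
  linarith

private lemma upperT_chi_nonneg {lam : ℝ} (hlam : 0 ≤ lam)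
    (K : Set (EuclideanSpace ℝ (Fin n))) (x : EuclideanSpace ℝ (Fin n)) :
    0 ≤ upperT lam (chi K) x := by
  unfold upperT
  have h : convEnv (fun y => lam * ‖y‖ ^ 2 - chi K y) x ≤ lam * ‖x‖ ^ 2 - chi K x := by
    apply convEnv_le (AffineMap.const ℝ (EuclideanSpace ℝ (Fin n)) (-1))
    · intro y
      have h1 := chi_le_one K y
      have h2 : 0 ≤ lam * ‖y‖ ^ 2 := by positivity
      simp only [AffineMap.const_apply]
      linarith
    · exact fun ℓ hℓ => hℓ x
  linarith [chi_nonneg K x]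

/-- Sup-norm nonexpansiveness of the lower transform. -/
private lemma lowerT_le {lam c : ℝ} (hlam : 0 < lam)
    {u w : EuclideanSpace ℝ (Fin n) → ℝ}
    (hu : ∀ y, 0 ≤ u y) (hw : ∀ y, 0 ≤ w y) (huw : ∀ y, u y ≤ w y + c)
    (x : EuclideanSpace ℝ (Fin n)) :
    lowerT lam u x ≤ lowerT lam w x + c := by
  unfold lowerT
  have main : convEnv (fun y => u y + lam * ‖y‖ ^ 2) x ≤
      convEnv (fun y => w y + lam * ‖y‖ ^ 2) x + c := by
    apply convEnv_le (AffineMap.const ℝ (EuclideanSpace ℝ (Fin n)) 0)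
    · intro y
      have h2 : 0 ≤ lam * ‖y‖ ^ 2 := by positivity
      simp only [AffineMap.const_apply]
      linarith [hu y]
    · intro ℓ hℓ
      set ℓ' : EuclideanSpace ℝ (Fin n) →ᵃ[ℝ] ℝ :=
        ℓ + AffineMap.const ℝ (EuclideanSpace ℝ (Fin n)) (-c) with hℓ'
      have happ : ∀ y, ℓ' y = ℓ y - c := by intro y; simp [hℓ', sub_eq_add_neg]
      have hmin : ∀ y, ℓ' y ≤ w y + lam * ‖y‖ ^ 2 := by
        intro y
        rw [happ y]
        linarith [hℓ y, huw y]
      have h3 := le_convEnv (x := x) ℓ' hmin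
      rw [happ x] at h3
      linarith
  linarith

end CCAux

/-- Intersection extraction transform
`I_λ(x; K) = |C^u_{4λ}(χ_K)(x) − 2(C^u_λ(χ_K)(x) − C^l_λ(C^u_λ(χ_K))(x))|`. -/
noncomputable def interT {n : ℕ} (lam : ℝ) (K : Set (EuclideanSpace ℝ (Fin n)))
    (x : EuclideanSpace ℝ (Fin n)) : ℝ :=
  |upperT (4 * lam) (chi K) x -
    2 * (upperT lam (chi K) x - lowerT lam (fun y => upperT lam (chi K) y) x)|

/-- Hausdorff-Lipschitz continuity of the intersection extraction transform. -/
theorem interT_hausdorff_lipschitz (n : ℕ) (hn : 1 ≤ n)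
    (E F : Set (EuclideanSpace ℝ (Fin n))) (hE : E.Nonempty) (hF : F.Nonempty)
    (hEc : IsCompact E) (hFc : IsCompact F)
    (lam : ℝ) (hlam : 0 < lam) (x : EuclideanSpace ℝ (Fin n)) :
    |interT lam E x - interT lam F x| ≤
      12 * Real.sqrt lam * Metric.hausdorffDist E F := by
  set H := hausdorffDist E F with hH
  have hH0 : 0 ≤ H := hausdorffDist_nonneg
  have hne : EMetric.hausdorffEdist E F ≠ ⊤ :=
    hausdorffEdist_ne_top_of_nonempty_of_bounded hE hF hEc.isBounded hFc.isBounded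
  have hcovEF : ∀ y ∈ E, ∃ z ∈ F, dist y z ≤ H := by
    intro y hy
    obtain ⟨z, hz, hd⟩ := hFc.exists_infDist_eq_dist hF y
    exact ⟨z, hz, by rw [← hd]; exact infDist_le_hausdorffDist_of_mem hy hne⟩
  have hcovFE : ∀ y ∈ F, ∃ z ∈ E, dist y z ≤ H := by
    intro y hy
    obtain ⟨z, hz, hd⟩ := hEc.exists_infDist_eq_dist hE y
    refine ⟨z, hz, ?_⟩
    rw [← hd]
    have h1 : infDist y E ≤ hausdorffDist F E :=
      infDist_le_hausdorffDist_of_mem hy (by rw [hausdorffEDist_comm]; exact hne)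
    rwa [hausdorffDist_comm] at h1
  set σ := Real.sqrt lam with hσ
  have hσ0 : 0 < σ := Real.sqrt_pos.mpr hlam
  have hlam4 : (0 : ℝ) < 4 * lam := by linarith
  have h4 : Real.sqrt (4 * lam) = 2 * σ := by
    rw [show (4 : ℝ) * lam = (2 * σ) ^ 2 by rw [mul_pow, hσ, Real.sq_sqrt hlam.le]; ring,
      Real.sqrt_sq (by positivity)]
  -- upper transform at scale 4λ
  have d1a := upperT_chi_le hlam4 hH0 hcovEF x
  have d1b := upperT_chi_le hlam4 hH0 hcovFE x
  rw [h4] at d1a d1b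
  -- upper transform at scale λ, pointwise
  have d2a : ∀ y, upperT lam (chi E) y ≤ upperT lam (chi F) y + 2 * σ * H :=
    fun y => upperT_chi_le hlam hH0 hcovEF y
  have d2b : ∀ y, upperT lam (chi F) y ≤ upperT lam (chi E) y + 2 * σ * H :=
    fun y => upperT_chi_le hlam hH0 hcovFE y
  -- mixed transform
  have hnE : ∀ y, 0 ≤ upperT lam (chi E) y := fun y => upperT_chi_nonneg hlam.le E y
  have hnF : ∀ y, 0 ≤ upperT lam (chi F) y := fun y => upperT_chi_nonneg hlam.le F y
  have d3a : lowerT lam (fun y => upperT lam (chi E) y) x ≤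
      lowerT lam (fun y => upperT lam (chi F) y) x + 2 * σ * H :=
    lowerT_le hlam hnE hnF d2a x
  have d3b : lowerT lam (fun y => upperT lam (chi F) y) x ≤
      lowerT lam (fun y => upperT lam (chi E) y) x + 2 * σ * H :=
    lowerT_le hlam hnF hnE d2b x
  unfold interT
  set A := upperT (4 * lam) (chi E) x -
      2 * (upperT lam (chi E) x - lowerT lam (fun y => upperT lam (chi E) y) x) with hA
  set B := upperT (4 * lam) (chi F) x -
      2 * (upperT lam (chi F) x - lowerT lam (fun y => upperT lam (chi F) y) x) with hB
  have hbound : |A - B| ≤ 12 * σ * H := by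
    rw [abs_le, hA, hB]
    constructor
    · linarith [d1b, d2a x, d2b x, d3a, d3b]
    · linarith [d1a, d2a x, d2b x, d3a, d3b]
  have h1 : |A| - |B| ≤ 12 * σ * H := le_trans (abs_sub_abs_le_abs_sub A B) hbound
  have h2 : |B| - |A| ≤ 12 * σ * H :=
    le_trans (abs_sub_abs_le_abs_sub B A) (by rw [abs_sub_comm B A]; exact hbound)
  rw [abs_le]
  exact ⟨by linarith, by linarith⟩
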